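/- arXiv:1404.7779 — 2 statements merged into one kernel-verified Lean document; each statement's English description precedes it below -/
import Mathlib

section
/- Let ν₁, ν₂ be measures on ℝ with ν₁ ≪ ν₂ and finite Hellinger-type integral H²(ν₁,ν₂) = ∫(√(dν₁/dν₂) - 1)² dν₂ < ∞. If moreover ∫ (√(dν₁/dν₂)(y) + 1)² ν₂(dy) restricted to |y| ≤ 1 is controlled by ∫_{|y|≤1} y² ν₂(dy) < ∞ (ν₂ a Lévy measure), then ∫_{|y|≤1} |y| |dν₁/dν₂(y) - 1| ν₂(dy) < ∞; in particular the quantity η = ∫_{|y|≤1} y (ν₁ - ν₂)(dy) is well defined and finite. -/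
open MeasureTheory

theorem eta_well_defined (ν₁ ν₂ : Measure ℝ) [SigmaFinite ν₁] [SigmaFinite ν₂]
    (hac : ν₁ ≪ ν₂)
    (hH : ∫⁻ y, ENNReal.ofReal ((Real.sqrt ((ν₁.rnDeriv ν₂ y).toReal) - 1) ^ 2) ∂ν₂ < ⊤)
    (hy2 : ∫⁻ y in {y : ℝ | |y| ≤ 1}, ENNReal.ofReal (y ^ 2) ∂ν₂ < ⊤) :
    (∫⁻ y in {y : ℝ | |y| ≤ 1},
        ENNReal.ofReal (|y| * |(ν₁.rnDeriv ν₂ y).toReal - 1|) ∂ν₂ < ⊤) ∧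
    IntegrableOn (fun y => y * ((ν₁.rnDeriv ν₂ y).toReal - 1)) {y : ℝ | |y| ≤ 1} ν₂ := by
  set g : ℝ → ℝ := fun y => (ν₁.rnDeriv ν₂ y).toReal with hgdef
  have hmeas : Measurable g := (Measure.measurable_rnDeriv ν₁ ν₂).ennreal_toReal
  set S : Set ℝ := {y : ℝ | |y| ≤ 1} with hS
  -- pointwise bound
  have hkey : ∀ y ∈ S, ENNReal.ofReal (|y| * |g y - 1|)
      ≤ ENNReal.ofReal (3/2) * ENNReal.ofReal ((Real.sqrt (g y) - 1) ^ 2)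
        + 4 * ENNReal.ofReal (y ^ 2) := by
    intro y hy
    have hg0 : 0 ≤ g y := ENNReal.toReal_nonneg
    have habs : |y| ≤ 1 := hy
    have hy0 : (0:ℝ) ≤ |y| := abs_nonneg y
    set s := Real.sqrt (g y) with hsdef
    have hsq : s ^ 2 = g y := Real.sq_sqrt hg0
    have hs0 : 0 ≤ s := Real.sqrt_nonneg _
    have hysq : y ^ 2 ≤ 1 := by nlinarith [sq_abs y]
    have h1 : |y| * |g y - 1| ≤ 3/2 * (s - 1) ^ 2 + 4 * y ^ 2 := by
      have h2 : |g y - 1| = |s - 1| * (s + 1) := by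
        rw [← hsq, show s ^ 2 - 1 = (s - 1) * (s + 1) by ring, abs_mul,
          abs_of_nonneg (by linarith : (0:ℝ) ≤ s + 1)]
      rw [h2]
      nlinarith [sq_abs (s - 1), sq_abs y,
        sq_nonneg (|s - 1| - |y| * (s + 1)),
        mul_nonneg (sq_nonneg y) (sq_nonneg (s - 3)),
        mul_nonneg (sub_nonneg.2 hysq) (sq_nonneg (s - 1))]
    calc ENNReal.ofReal (|y| * |g y - 1|)
        ≤ ENNReal.ofReal (3/2 * (s - 1) ^ 2 + 4 * y ^ 2) := ENNReal.ofReal_le_ofReal h1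
      _ = ENNReal.ofReal (3/2 * (s - 1) ^ 2) + ENNReal.ofReal (4 * y ^ 2) := by
          rw [ENNReal.ofReal_add (by positivity) (by positivity)]
      _ = ENNReal.ofReal (3/2) * ENNReal.ofReal ((s - 1) ^ 2)
            + 4 * ENNReal.ofReal (y ^ 2) := by
          rw [ENNReal.ofReal_mul (by norm_num), ENNReal.ofReal_mul (by norm_num)]
          norm_num
  have hmeas2 : Measurable fun y =>
      ENNReal.ofReal (3/2) * ENNReal.ofReal ((Real.sqrt (g y) - 1) ^ 2)
        + 4 * ENNReal.ofReal (y ^ 2) := by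
    refine Measurable.add (f := fun y => ENNReal.ofReal (3/2) * ENNReal.ofReal ((Real.sqrt (g y) - 1) ^ 2))
      (g := fun y => 4 * ENNReal.ofReal (y ^ 2)) ?_ ?_
    · exact (ENNReal.measurable_ofReal.comp
        (((hmeas.sqrt).sub measurable_const).pow_const 2)).const_mul _
    · exact (ENNReal.measurable_ofReal.comp ((measurable_id.pow_const 2))).const_mul _
  have hbound : ∫⁻ y in S, ENNReal.ofReal (|y| * |g y - 1|) ∂ν₂
      ≤ ENNReal.ofReal (3/2) * ∫⁻ y, ENNReal.ofReal ((Real.sqrt (g y) - 1) ^ 2) ∂ν₂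
        + 4 * ∫⁻ y in S, ENNReal.ofReal (y ^ 2) ∂ν₂ := by
    refine (setLIntegral_mono hmeas2 hkey).trans ?_
    rw [lintegral_add_left (by fun_prop)]
    gcongr
    · rw [lintegral_const_mul _ (by fun_prop)]
      gcongr
      exact Measure.restrict_le_self
    · rw [lintegral_const_mul _ (by fun_prop)]
  have hfin : ∫⁻ y in S, ENNReal.ofReal (|y| * |g y - 1|) ∂ν₂ < ⊤ := by
    refine hbound.trans_lt ?_
    exact ENNReal.add_lt_top.2 ⟨ENNReal.mul_lt_top ENNReal.ofReal_lt_top hH,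
      ENNReal.mul_lt_top (by norm_num) hy2⟩
  refine ⟨hfin, ?_, ?_⟩
  · exact ((measurable_id.mul (hmeas.sub measurable_const)).aestronglyMeasurable)
  · have : ∀ y : ℝ, (‖y * (g y - 1)‖₊ : ENNReal) = ENNReal.ofReal (|y| * |g y - 1|) := by
      intro y
      rw [← enorm_eq_nnnorm, Real.enorm_eq_ofReal_abs, abs_mul]
    show ∫⁻ y in S, (‖y * (g y - 1)‖₊ : ENNReal) ∂ν₂ < ⊤
    simpa only [this] using hfin
end

section
/- Let X be a real random variable and suppose the law of X is a product structure X = C + D with C and D independent real random variables satisfying E[e^C] = 1 and E[e^D] = 1. Then E|1 - e^{C+D}| ≤ E|1 - e^D| + E|1 - e^C|. -/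
open MeasureTheory ProbabilityTheory

theorem abs_one_sub_exp_add_indep
    {Ω : Type*} [MeasurableSpace Ω] (μ : Measure Ω) [IsProbabilityMeasure μ]
    (C D : Ω → ℝ) (hCD : IndepFun C D μ)
    (hC : Integrable (fun ω => Real.exp (C ω)) μ)
    (hD : Integrable (fun ω => Real.exp (D ω)) μ)
    (hEC : ∫ ω, Real.exp (C ω) ∂μ = 1)
    (hED : ∫ ω, Real.exp (D ω) ∂μ = 1) :
    ∫ ω, |1 - Real.exp (C ω + D ω)| ∂μ ≤
      (∫ ω, |1 - Real.exp (D ω)| ∂μ) + ∫ ω, |1 - Real.exp (C ω)| ∂μ := by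
  have key : ∀ x y : ℝ, |1 - Real.exp (x + y)| ≤
      (1 + Real.exp x) / 2 * |1 - Real.exp y| + (1 + Real.exp y) / 2 * |1 - Real.exp x| := by
    intro x y
    have hx := (Real.exp_pos x).le
    have hy := (Real.exp_pos y).le
    have h : 1 - Real.exp (x + y) =
        (1 + Real.exp x) / 2 * (1 - Real.exp y) + (1 + Real.exp y) / 2 * (1 - Real.exp x) := by
      rw [Real.exp_add]; ring
    rw [h]
    refine (abs_add_le _ _).trans ?_
    rw [abs_mul, abs_mul, abs_of_nonneg (by linarith : (0:ℝ) ≤ (1 + Real.exp x) / 2),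
      abs_of_nonneg (by linarith : (0:ℝ) ≤ (1 + Real.exp y) / 2)]
  -- independence of composed functions
  have mφ : Measurable (fun t : ℝ => (1 + Real.exp t) / 2) := by measurability
  have mψ : Measurable (fun t : ℝ => |1 - Real.exp t|) := by measurability
  have ind1 : IndepFun (fun ω => (1 + Real.exp (C ω)) / 2)
      (fun ω => |1 - Real.exp (D ω)|) μ := hCD.comp mφ mψ
  have ind2 : IndepFun (fun ω => (1 + Real.exp (D ω)) / 2)
      (fun ω => |1 - Real.exp (C ω)|) μ := hCD.symm.comp mφ mψ
  have indE : IndepFun (fun ω => Real.exp (C ω)) (fun ω => Real.exp (D ω)) μ :=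
    hCD.comp Real.measurable_exp Real.measurable_exp
  -- integrabilities
  have iAC : Integrable (fun ω => (1 + Real.exp (C ω)) / 2) μ :=
    ((integrable_const 1).add hC).div_const 2
  have iAD : Integrable (fun ω => (1 + Real.exp (D ω)) / 2) μ :=
    ((integrable_const 1).add hD).div_const 2
  have iBC : Integrable (fun ω => |1 - Real.exp (C ω)|) μ := ((integrable_const 1).sub hC).abs
  have iBD : Integrable (fun ω => |1 - Real.exp (D ω)|) μ := ((integrable_const 1).sub hD).abs
  have iP1 : Integrable (fun ω => (1 + Real.exp (C ω)) / 2 * |1 - Real.exp (D ω)|) μ :=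
    ind1.integrable_mul iAC iBD
  have iP2 : Integrable (fun ω => (1 + Real.exp (D ω)) / 2 * |1 - Real.exp (C ω)|) μ :=
    ind2.integrable_mul iAD iBC
  have iE : Integrable (fun ω => Real.exp (C ω) * Real.exp (D ω)) μ :=
    indE.integrable_mul hC hD
  have iL : Integrable (fun ω => |1 - Real.exp (C ω + D ω)|) μ := by
    have : (fun ω => |1 - Real.exp (C ω + D ω)|)
        = fun ω => |1 - Real.exp (C ω) * Real.exp (D ω)| := by
      funext ω; rw [Real.exp_add]
    rw [this]
    exact ((integrable_const 1).sub iE).abs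
  have hmono : ∫ ω, |1 - Real.exp (C ω + D ω)| ∂μ ≤
      ∫ ω, ((1 + Real.exp (C ω)) / 2 * |1 - Real.exp (D ω)|
        + (1 + Real.exp (D ω)) / 2 * |1 - Real.exp (C ω)|) ∂μ :=
    integral_mono iL (iP1.add iP2) (fun ω => key (C ω) (D ω))
  rw [integral_add iP1 iP2] at hmono
  have hAC : ∫ ω, (1 + Real.exp (C ω)) / 2 ∂μ = 1 := by
    rw [integral_div, integral_add (integrable_const 1) hC, hEC, integral_const]
    simp
  have hAD : ∫ ω, (1 + Real.exp (D ω)) / 2 ∂μ = 1 := by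
    rw [integral_div, integral_add (integrable_const 1) hD, hED, integral_const]
    simp
  have e1 : ∫ ω, (1 + Real.exp (C ω)) / 2 * |1 - Real.exp (D ω)| ∂μ
      = ∫ ω, |1 - Real.exp (D ω)| ∂μ := by
    exact (ind1.integral_fun_mul_eq_mul_integral iAC.aestronglyMeasurable iBD.aestronglyMeasurable).trans
      (by rw [hAC, one_mul])
  have e2 : ∫ ω, (1 + Real.exp (D ω)) / 2 * |1 - Real.exp (C ω)| ∂μ
      = ∫ ω, |1 - Real.exp (C ω)| ∂μ := by
    exact (ind2.integral_fun_mul_eq_mul_integral iAD.aestronglyMeasurable iBC.aestronglyMeasurable).trans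
      (by rw [hAD, one_mul])
  rw [e1, e2] at hmono
  exact hmono
end
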